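/- For each m ≥ 1, let T_m be the complete 5-partite graph on 5m vertices with all five parts of size m. Then I(K_{1,1,2}; T_m)/binom(5m,4) tends to 72/125 as m → ∞. -/

import Mathlib

open MeasureTheory Finset Filter Topology
open scoped Classical

/-- `K_{1,1,2}`: the complete tripartite graph with parts `{0}`, `{1}`, `{2,3}`,
i.e. `K₄` minus the edge `{2,3}`. -/
def K112 : SimpleGraph (Fin 4) where
  Adj u v := u ≠ v ∧ ¬(u = 2 ∧ v = 3) ∧ ¬(u = 3 ∧ v = 2)
  symm := ⟨by decide⟩
  loopless := ⟨by decide⟩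

/-- `I(H;G)`: the number of `|V(H)|`-element subsets `S` of `V(G)` such that the
subgraph of `G` induced on `S` is isomorphic to `H`. -/
noncomputable def numInduced {α β : Type*} [Fintype α] [Fintype β] [DecidableEq β]
    (H : SimpleGraph α) (G : SimpleGraph β) : ℕ :=
  (Finset.univ.filter fun S : Finset β =>
    S.card = Fintype.card α ∧ Nonempty (H ≃g G.induce (S : Set β))).card

/-- The complete 5-partite graph on `5m` vertices with all five parts of size `m`. -/
def T (m : ℕ) : SimpleGraph (Fin 5 × Fin m) where
  Adj u v := u.1 ≠ v.1
  symm := ⟨fun _ _ h => Ne.symm h⟩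
  loopless := ⟨fun _ h => h rfl⟩

section Aux

variable {α : Type*} [DecidableEq α]

lemma card3_distinct {a b c : α} (h : ({a,b,c} : Finset α).card = 3) :
    a ≠ b ∧ a ≠ c ∧ b ≠ c := by
  refine ⟨?_, ?_, ?_⟩ <;> rintro rfl
  · have : ({a,a,c} : Finset α) = {a,c} := by simp
    rw [this] at h
    have := Finset.card_insert_le a ({c} : Finset α)
    simp at this; omega
  · have : ({a,b,a} : Finset α) = {a,b} := by
      ext t; simp; tauto
    rw [this] at h
    have := Finset.card_insert_le a ({b} : Finset α)
    simp at this; omega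
  · have : ({a,b,b} : Finset α) = {a,b} := by simp
    rw [this] at h
    have := Finset.card_insert_le a ({b} : Finset α)
    simp at this; omega

lemma one_pair {a b c d : α} (h : ({a,b,c,d} : Finset α).card = 3) :
    (a = b ∧ a ≠ c ∧ a ≠ d ∧ c ≠ d) ∨ (a = c ∧ a ≠ b ∧ a ≠ d ∧ b ≠ d) ∨
    (a = d ∧ a ≠ b ∧ a ≠ c ∧ b ≠ c) ∨ (b = c ∧ b ≠ a ∧ b ≠ d ∧ a ≠ d) ∨
    (b = d ∧ b ≠ a ∧ b ≠ c ∧ a ≠ c) ∨ (c = d ∧ c ≠ a ∧ c ≠ b ∧ a ≠ b) := by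
  by_cases hab : a = b
  · subst hab
    have he : ({a,a,c,d} : Finset α) = {a,c,d} := by simp
    rw [he] at h
    exact Or.inl ⟨rfl, card3_distinct h⟩
  by_cases hac : a = c
  · subst hac
    have he : ({a,b,a,d} : Finset α) = {a,b,d} := by ext t; simp; tauto
    rw [he] at h
    obtain ⟨h1,h2,h3⟩ := card3_distinct h
    exact Or.inr (Or.inl ⟨rfl, h1, h2, h3⟩)
  by_cases had : a = d
  · subst had
    have he : ({a,b,c,a} : Finset α) = {a,b,c} := by ext t; simp; tauto
    rw [he] at h
    obtain ⟨h1,h2,h3⟩ := card3_distinct h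
    exact Or.inr (Or.inr (Or.inl ⟨rfl, h1, h2, h3⟩))
  by_cases hbc : b = c
  · subst hbc
    have he : ({a,b,b,d} : Finset α) = {b,a,d} := by ext t; simp; tauto
    rw [he] at h
    obtain ⟨h1,h2,h3⟩ := card3_distinct h
    exact Or.inr (Or.inr (Or.inr (Or.inl ⟨rfl, h1, h2, h3⟩)))
  by_cases hbd : b = d
  · subst hbd
    have he : ({a,b,c,b} : Finset α) = {b,a,c} := by ext t; simp; tauto
    rw [he] at h
    obtain ⟨h1,h2,h3⟩ := card3_distinct h
    exact Or.inr (Or.inr (Or.inr (Or.inr (Or.inl ⟨rfl, h1, h2, h3⟩))))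
  by_cases hcd : c = d
  · subst hcd
    have he : ({a,b,c,c} : Finset α) = {c,a,b} := by ext t; simp; tauto
    rw [he] at h
    obtain ⟨h1,h2,h3⟩ := card3_distinct h
    exact Or.inr (Or.inr (Or.inr (Or.inr (Or.inr ⟨rfl, h1, h2, h3⟩))))
  · exfalso
    have : ({a,b,c,d} : Finset α).card = 4 := by
      rw [Finset.card_insert_of_notMem (by simp [hab, hac, had]),
          Finset.card_insert_of_notMem (by simp [hbc, hbd]),
          Finset.card_insert_of_notMem (by simp [hcd]),
          Finset.card_singleton]
    omega

lemma card_eq_four' {s : Finset α} (h : s.card = 4) :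
    ∃ p q r t, p ≠ q ∧ p ≠ r ∧ p ≠ t ∧ q ≠ r ∧ q ≠ t ∧ r ≠ t ∧ s = {p,q,r,t} := by
  obtain ⟨p, hp⟩ : s.Nonempty := by rw [← Finset.card_pos]; omega
  have h3 : (s.erase p).card = 3 := by rw [Finset.card_erase_of_mem hp]; omega
  obtain ⟨q, r, t, hqr, hqt, hrt, he⟩ := Finset.card_eq_three.mp h3
  refine ⟨p, q, r, t, ?_, ?_, ?_, hqr, hqt, hrt, ?_⟩
  · rintro rfl; have := Finset.notMem_erase p s; rw [he] at this; simp at this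
  · rintro rfl; have := Finset.notMem_erase p s; rw [he] at this; simp at this
  · rintro rfl; have := Finset.notMem_erase p s; rw [he] at this; simp at this
  · rw [← Finset.insert_erase hp, he]

lemma pair4_perm (p q r s : α) : ({p,q,r,s} : Finset α) = {p,q,s,r} := by
  ext t; simp; tauto

lemma perm_prqs (p q r s : α) : ({p,q,r,s} : Finset α) = {p,r,q,s} := by
  ext t; simp; tauto

lemma perm_psqr (p q r s : α) : ({p,q,r,s} : Finset α) = {p,s,q,r} := by
  ext t; simp; tauto

lemma perm_qrps (p q r s : α) : ({p,q,r,s} : Finset α) = {q,r,p,s} := by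
  ext t; simp; tauto

lemma perm_qspr (p q r s : α) : ({p,q,r,s} : Finset α) = {q,s,p,r} := by
  ext t; simp; tauto

lemma perm_rspq (p q r s : α) : ({p,q,r,s} : Finset α) = {r,s,p,q} := by
  ext t; simp; tauto

end Aux

lemma decomp_core {m : ℕ} {S : Finset (Fin 5 × Fin m)} {p q r s : Fin 5 × Fin m}
    (hS : S = {p,q,r,s}) (hpq : p ≠ q) (h1 : p.1 = q.1) (h2 : p.1 ≠ r.1)
    (h3 : p.1 ≠ s.1) (h4 : r.1 ≠ s.1) :
    ∃ (i j k : Fin 5) (x y a b : Fin m), j < k ∧ j ≠ i ∧ k ≠ i ∧ x ≠ y ∧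
      S = {(i,x),(i,y),(j,a),(k,b)} := by
  have hxy : p.2 ≠ q.2 := fun h => hpq (Prod.ext h1 h)
  have e2 : (p.1, q.2) = q := by rw [h1]
  rcases h4.lt_or_gt with hlt | hlt
  · exact ⟨p.1, r.1, s.1, p.2, q.2, r.2, s.2, hlt, Ne.symm h2, Ne.symm h3, hxy, by
      rw [hS, e2]⟩
  · exact ⟨p.1, s.1, r.1, p.2, q.2, s.2, r.2, hlt, Ne.symm h3, Ne.symm h2, hxy, by
      rw [hS, pair4_perm, e2]⟩

/-- Decomposition of a good set. -/
lemma decomp {m : ℕ} {S : Finset (Fin 5 × Fin m)}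
    (h4 : S.card = 4) (h3 : (S.image Prod.fst).card = 3) :
    ∃ (i j k : Fin 5) (x y a b : Fin m), j < k ∧ j ≠ i ∧ k ≠ i ∧ x ≠ y ∧
      S = {(i,x),(i,y),(j,a),(k,b)} := by
  obtain ⟨p, q, r, s, hpq, hpr, hps, hqr, hqs, hrs, hS⟩ := card_eq_four' h4
  have him : S.image Prod.fst = {p.1, q.1, r.1, s.1} := by
    rw [hS]; simp [Finset.image_insert]
  rw [him] at h3
  rcases one_pair h3 with ⟨e, d1, d2, d3⟩ | ⟨e, d1, d2, d3⟩ | ⟨e, d1, d2, d3⟩ |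
    ⟨e, d1, d2, d3⟩ | ⟨e, d1, d2, d3⟩ | ⟨e, d1, d2, d3⟩
  · exact decomp_core hS hpq e d1 d2 d3
  · have h2 : S = {p,r,q,s} := hS.trans (perm_prqs p q r s)
    exact decomp_core h2 hpr e d1 d2 d3
  · have h2 : S = {p,s,q,r} := hS.trans (perm_psqr p q r s)
    exact decomp_core h2 hps e d1 d2 d3
  · have h2 : S = {q,r,p,s} := hS.trans (perm_qrps p q r s)
    exact decomp_core h2 hqr e d1 d2 d3
  · have h2 : S = {q,s,p,r} := hS.trans (perm_qspr p q r s)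
    exact decomp_core h2 hqs e d1 d2 d3
  · have h2 : S = {r,s,p,q} := hS.trans (perm_rspq p q r s)
    exact decomp_core h2 hrs e d1 d2 d3

/-- Conversely, an explicitly decomposed set is good. -/
lemma good_of {m : ℕ} {i j k : Fin 5} {x y a b : Fin m}
    (hji : j ≠ i) (hki : k ≠ i) (hjk : j ≠ k) (hxy : x ≠ y) :
    ({(i,x),(i,y),(j,a),(k,b)} : Finset (Fin 5 × Fin m)).card = 4 ∧
    ((({(i,x),(i,y),(j,a),(k,b)} : Finset (Fin 5 × Fin m))).image Prod.fst).card = 3 := by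
  constructor
  · rw [Finset.card_insert_of_notMem (by simp [Prod.ext_iff, hxy, hji.symm, hki.symm]),
        Finset.card_insert_of_notMem (by simp [Prod.ext_iff, hji.symm, hki.symm]),
        Finset.card_insert_of_notMem (by simp [Prod.ext_iff, hjk]),
        Finset.card_singleton]
  · have : (({(i,x),(i,y),(j,a),(k,b)} : Finset (Fin 5 × Fin m))).image Prod.fst
        = {i, j, k} := by simp [Finset.image_insert]
    rw [this, Finset.card_insert_of_notMem (by simp [hji.symm, hki.symm]),
        Finset.card_insert_of_notMem (by simp [hjk]), Finset.card_singleton]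

lemma iso_of_decomp {m : ℕ} {i j k : Fin 5} {x y a b : Fin m}
    (hji : j ≠ i) (hki : k ≠ i) (hjk : j ≠ k) (hxy : x ≠ y) :
    Nonempty (K112 ≃g (T m).induce
      ((({(i,x),(i,y),(j,a),(k,b)} : Finset (Fin 5 × Fin m)) : Set (Fin 5 × Fin m)))) := by
  set S : Finset (Fin 5 × Fin m) := {(i,x),(i,y),(j,a),(k,b)} with hSdef
  have mja : ((j,a) : Fin 5 × Fin m) ∈ (S : Set (Fin 5 × Fin m)) := by simp [hSdef]
  have mkb : ((k,b) : Fin 5 × Fin m) ∈ (S : Set (Fin 5 × Fin m)) := by simp [hSdef]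
  have mix : ((i,x) : Fin 5 × Fin m) ∈ (S : Set (Fin 5 × Fin m)) := by simp [hSdef]
  have miy : ((i,y) : Fin 5 × Fin m) ∈ (S : Set (Fin 5 × Fin m)) := by simp [hSdef]
  have hc4 : S.card = 4 := by
    rw [hSdef]
    rw [Finset.card_insert_of_notMem (by simp [Prod.ext_iff, hxy, hji.symm, hki.symm]),
        Finset.card_insert_of_notMem (by simp [Prod.ext_iff, hji.symm, hki.symm]),
        Finset.card_insert_of_notMem (by simp [Prod.ext_iff, hjk]),
        Finset.card_singleton]
  have hc : Fintype.card ((S : Set (Fin 5 × Fin m))) = 4 := by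
    rw [← Set.toFinset_card, Finset.toFinset_coe, hc4]
  let f : Fin 4 → ((S : Set (Fin 5 × Fin m))) :=
    ![⟨(j,a), mja⟩, ⟨(k,b), mkb⟩, ⟨(i,x), mix⟩, ⟨(i,y), miy⟩]
  have hinj : Function.Injective f := by
    intro u v huv
    fin_cases u <;> fin_cases v <;>
      simp_all [f, Subtype.ext_iff, Prod.ext_iff] <;> tauto
  have hbij : Function.Bijective f :=
    (Fintype.bijective_iff_injective_and_card f).mpr ⟨hinj, by rw [hc]; simp⟩
  refine ⟨{ toEquiv := Equiv.ofBijective f hbij, map_rel_iff' := ?_ }⟩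
  intro u v
  show (T m).Adj (f u : Fin 5 × Fin m) (f v) ↔ K112.Adj u v
  fin_cases u <;> fin_cases v <;>
    simp_all [f, K112, T, Prod.ext_iff] <;> tauto

lemma image_card_of_iso {m : ℕ} {S : Finset (Fin 5 × Fin m)} (h4 : S.card = 4)
    (h : Nonempty (K112 ≃g (T m).induce (S : Set (Fin 5 × Fin m)))) :
    (S.image Prod.fst).card = 3 := by
  obtain ⟨e⟩ := h
  set v0 := ((e 0 : (S : Set (Fin 5 × Fin m))) : Fin 5 × Fin m) with hv0
  set v1 := ((e 1 : (S : Set (Fin 5 × Fin m))) : Fin 5 × Fin m) with hv1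
  set v2 := ((e 2 : (S : Set (Fin 5 × Fin m))) : Fin 5 × Fin m) with hv2
  set v3 := ((e 3 : (S : Set (Fin 5 × Fin m))) : Fin 5 × Fin m) with hv3
  have hmem : ∀ u : Fin 4, ((e u : (S : Set (Fin 5 × Fin m))) : Fin 5 × Fin m) ∈ S :=
    fun u => (e u).2
  have hne : ∀ u v : Fin 4, u ≠ v →
      ((e u : (S : Set (Fin 5 × Fin m))) : Fin 5 × Fin m) ≠ e v := by
    intro u v huv hval
    exact huv (e.toEquiv.injective (Subtype.ext hval))
  have hadj : ∀ u v : Fin 4, K112.Adj u v →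
      ((e u : (S : Set (Fin 5 × Fin m))) : Fin 5 × Fin m).1 ≠
        ((e v : (S : Set (Fin 5 × Fin m))) : Fin 5 × Fin m).1 := by
    intro u v huv
    have := e.map_rel_iff.mpr huv
    exact this
  have hnadj : ((e 2 : (S : Set (Fin 5 × Fin m))) : Fin 5 × Fin m).1 =
      ((e 3 : (S : Set (Fin 5 × Fin m))) : Fin 5 × Fin m).1 := by
    have hK : ¬ K112.Adj 2 3 := by simp [K112]
    have := hK ∘ e.map_rel_iff.mp
    by_contra hcon
    exact this hcon
  have hsub : ({v0, v1, v2, v3} : Finset (Fin 5 × Fin m)) ⊆ S := by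
    intro t ht
    simp only [Finset.mem_insert, Finset.mem_singleton] at ht
    rcases ht with rfl|rfl|rfl|rfl
    exacts [hmem 0, hmem 1, hmem 2, hmem 3]
  have hcard : ({v0, v1, v2, v3} : Finset (Fin 5 × Fin m)).card = 4 := by
    rw [Finset.card_insert_of_notMem (by
          simp only [Finset.mem_insert, Finset.mem_singleton]
          push_neg
          exact ⟨hne 0 1 (by decide), hne 0 2 (by decide), hne 0 3 (by decide)⟩),
        Finset.card_insert_of_notMem (by
          simp only [Finset.mem_insert, Finset.mem_singleton]
          push_neg
          exact ⟨hne 1 2 (by decide), hne 1 3 (by decide)⟩),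
        Finset.card_insert_of_notMem (by
          simp only [Finset.mem_singleton]
          exact hne 2 3 (by decide)),
        Finset.card_singleton]
  have hSeq : S = {v0, v1, v2, v3} :=
    (Finset.eq_of_subset_of_card_le hsub (by omega)).symm
  have him : S.image Prod.fst = {v0.1, v1.1, v2.1, v3.1} := by
    rw [hSeq]; simp [Finset.image_insert]
  have h32 : v3.1 = v2.1 := hnadj.symm
  have heq3 : ({v0.1, v1.1, v2.1, v3.1} : Finset (Fin 5)) = {v0.1, v1.1, v2.1} := by
    rw [h32]; ext t; simp; try tauto
  rw [him, heq3,
      Finset.card_insert_of_notMem (by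
        simp only [Finset.mem_insert, Finset.mem_singleton]
        push_neg
        exact ⟨hadj 0 1 (by simp [K112]), hadj 0 2 (by simp [K112])⟩),
      Finset.card_insert_of_notMem (by
        simp only [Finset.mem_singleton]
        exact hadj 1 2 (by simp [K112])),
      Finset.card_singleton]

section Aux
variable {α : Type*} [DecidableEq α]
lemma union_pair_pair (u v w z : α) : ({u,v} : Finset α) ∪ {w,z} = {u,v,w,z} := by
  ext t; simp; tauto
lemma pair_card {u v : α} (h : u ≠ v) : ({u,v} : Finset α).card = 2 := by
  rw [Finset.card_insert_of_notMem (by simp [h]), Finset.card_singleton]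
end Aux

def A5 : Finset (Fin 5 × Fin 5 × Fin 5) :=
  Finset.univ.filter fun t => t.2.1 < t.2.2 ∧ t.2.1 ≠ t.1 ∧ t.2.2 ≠ t.1

lemma A5_card : A5.card = 30 := by decide


lemma count_good (m : ℕ) :
    (Finset.univ.filter fun S : Finset (Fin 5 × Fin m) =>
      S.card = 4 ∧ (S.image Prod.fst).card = 3).card = 30 * (m.choose 2 * (m * m)) := by
  classical
  have hsrc : (A5 ×ˢ (((Finset.univ : Finset (Fin m)).powersetCard 2) ×ˢ
      (Finset.univ : Finset (Fin m × Fin m)))).card = 30 * (m.choose 2 * (m * m)) := by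
    rw [Finset.card_product, Finset.card_product, A5_card, Finset.card_powersetCard]
    simp [Fintype.card_fin]
  rw [← hsrc]
  refine (Finset.card_bij
    (fun t _ => (t.2.1.image fun z => (t.1.1, z)) ∪
      {(t.1.2.1, t.2.2.1), (t.1.2.2, t.2.2.2)}) ?_ ?_ ?_).symm
  · -- maps into target
    rintro ⟨⟨i, j, k⟩, P, a, b⟩ ht
    simp only [Finset.mem_product, Finset.mem_powersetCard, Finset.mem_univ, and_true,
      A5, Finset.mem_filter, true_and] at ht
    obtain ⟨⟨hjk, hji, hki⟩, -, hPc⟩ := ht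
    obtain ⟨x, y, hxy, rfl⟩ := Finset.card_eq_two.mp hPc
    simp only [Finset.mem_filter, Finset.mem_univ, true_and]
    have himg : (({x, y} : Finset (Fin m)).image fun z => (i, z)) = {(i,x),(i,y)} := by
      simp
    rw [himg, union_pair_pair]
    exact good_of hji hki hjk.ne hxy
  · -- injective
    rintro ⟨⟨i, j, k⟩, P, a, b⟩ ht ⟨⟨i', j', k'⟩, P', a', b'⟩ ht' hEq
    simp only [Finset.mem_product, Finset.mem_powersetCard, Finset.mem_univ, and_true,
      A5, Finset.mem_filter, true_and] at ht ht'
    obtain ⟨⟨hjk, hji, hki⟩, -, hPc⟩ := ht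
    obtain ⟨⟨hjk', hji', hki'⟩, -, hPc'⟩ := ht'
    obtain ⟨x, y, hxy, rfl⟩ := Finset.card_eq_two.mp hPc
    obtain ⟨x', y', hxy', rfl⟩ := Finset.card_eq_two.mp hPc'
    have himg : (({x, y} : Finset (Fin m)).image fun z => (i, z)) = {(i,x),(i,y)} := by simp
    have himg' : (({x', y'} : Finset (Fin m)).image fun z => (i', z)) = {(i',x'),(i',y')} := by
      simp
    simp only at hEq
    rw [himg, himg', union_pair_pair, union_pair_pair] at hEq
    -- memberships
    have mix : ((i,x) : Fin 5 × Fin m) ∈ ({(i',x'),(i',y'),(j',a'),(k',b')} :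
        Finset (Fin 5 × Fin m)) := by rw [← hEq]; simp
    have miy : ((i,y) : Fin 5 × Fin m) ∈ ({(i',x'),(i',y'),(j',a'),(k',b')} :
        Finset (Fin 5 × Fin m)) := by rw [← hEq]; simp
    have mja : ((j,a) : Fin 5 × Fin m) ∈ ({(i',x'),(i',y'),(j',a'),(k',b')} :
        Finset (Fin 5 × Fin m)) := by rw [← hEq]; simp
    have mkb : ((k,b) : Fin 5 × Fin m) ∈ ({(i',x'),(i',y'),(j',a'),(k',b')} :
        Finset (Fin 5 × Fin m)) := by rw [← hEq]; simp
    have mix' : ((i',x') : Fin 5 × Fin m) ∈ ({(i,x),(i,y),(j,a),(k,b)} :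
        Finset (Fin 5 × Fin m)) := by rw [hEq]; simp
    have miy' : ((i',y') : Fin 5 × Fin m) ∈ ({(i,x),(i,y),(j,a),(k,b)} :
        Finset (Fin 5 × Fin m)) := by rw [hEq]; simp
    simp only [Finset.mem_insert, Finset.mem_singleton, Prod.mk.injEq] at mix miy mja mkb mix' miy'
    -- first: i = i'
    have hii : i = i' := by
      rcases mix with ⟨h1,h2⟩|⟨h1,h2⟩|⟨h1,h2⟩|⟨h1,h2⟩
      · exact h1
      · exact h1
      · -- i = j'
        rcases miy with ⟨g1,g2⟩|⟨g1,g2⟩|⟨g1,g2⟩|⟨g1,g2⟩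
        · exact g1
        · exact g1
        · exact absurd (h2.trans g2.symm) hxy
        · exact absurd (h1.symm.trans g1) hjk'.ne
      · -- i = k'
        rcases miy with ⟨g1,g2⟩|⟨g1,g2⟩|⟨g1,g2⟩|⟨g1,g2⟩
        · exact g1
        · exact g1
        · exact absurd (g1.symm.trans h1) hjk'.ne
        · exact absurd (h2.trans g2.symm) hxy
    subst hii
    -- next: j = j', k = k', a = a', b = b'
    have hjj : j = j' ∧ a = a' ∧ k = k' ∧ b = b' := by
      rcases mja with ⟨h1,h2⟩|⟨h1,h2⟩|⟨h1,h2⟩|⟨h1,h2⟩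
      · exact absurd h1 hji
      · exact absurd h1 hji
      · rcases mkb with ⟨g1,g2⟩|⟨g1,g2⟩|⟨g1,g2⟩|⟨g1,g2⟩
        · exact absurd g1 hki
        · exact absurd g1 hki
        · exact absurd (h1.trans g1.symm) hjk.ne
        · exact ⟨h1, h2, g1, g2⟩
      · rcases mkb with ⟨g1,g2⟩|⟨g1,g2⟩|⟨g1,g2⟩|⟨g1,g2⟩
        · exact absurd g1 hki
        · exact absurd g1 hki
        · have q1 : j < j' := g1 ▸ hjk
          have q2 : j' < j := by rw [h1]; exact hjk'
          exact absurd (lt_trans q1 q2) (lt_irrefl _)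
        · exact absurd (h1.trans g1.symm) hjk.ne
    obtain ⟨rfl, rfl, rfl, rfl⟩ := hjj
    -- finally {x,y} = {x',y'}
    have hxmem : x ∈ ({x',y'} : Finset (Fin m)) := by
      rcases mix with ⟨h1,h2⟩|⟨h1,h2⟩|⟨h1,h2⟩|⟨h1,h2⟩
      · simp [h2]
      · simp [h2]
      · exact absurd h1.symm hji
      · exact absurd h1.symm hki
    have hymem : y ∈ ({x',y'} : Finset (Fin m)) := by
      rcases miy with ⟨h1,h2⟩|⟨h1,h2⟩|⟨h1,h2⟩|⟨h1,h2⟩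
      · simp [h2]
      · simp [h2]
      · exact absurd h1.symm hji
      · exact absurd h1.symm hki
    have hxmem' : x' ∈ ({x,y} : Finset (Fin m)) := by
      rcases mix' with ⟨h1,h2⟩|⟨h1,h2⟩|⟨h1,h2⟩|⟨h1,h2⟩
      · simp [h2]
      · simp [h2]
      · exact absurd h1.symm hji
      · exact absurd h1.symm hki
    have hP : ({x,y} : Finset (Fin m)) = {x',y'} := by
      apply Finset.Subset.antisymm
      · intro t htm
        simp only [Finset.mem_insert, Finset.mem_singleton] at htm
        rcases htm with rfl|rfl
        exacts [hxmem, hymem]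
      · intro t htm
        simp only [Finset.mem_insert, Finset.mem_singleton] at htm
        rcases htm with rfl|rfl
        · exact hxmem'
        · -- y' ∈ {x,y}
          rcases miy' with ⟨h1,h2⟩|⟨h1,h2⟩|⟨h1,h2⟩|⟨h1,h2⟩
          · simp [h2]
          · simp [h2]
          · exact absurd h1.symm hji
          · exact absurd h1.symm hki
    rw [hP]
  · -- surjective
    intro S hS
    simp only [Finset.mem_filter, Finset.mem_univ, true_and] at hS
    obtain ⟨i, j, k, x, y, a, b, hjk, hji, hki, hxy, rfl⟩ := decomp hS.1 hS.2
    refine ⟨⟨⟨i, j, k⟩, {x, y}, ⟨a, b⟩⟩, ?_, ?_⟩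
    · simp only [Finset.mem_product, Finset.mem_powersetCard, Finset.mem_univ, and_true,
        A5, Finset.mem_filter, true_and]
      exact ⟨⟨hjk, hji, hki⟩, fun t _ => Finset.mem_univ t, pair_card hxy⟩
    · have himg : (({x, y} : Finset (Fin m)).image fun z => (i, z)) = {(i,x),(i,y)} := by simp
      simp only
      rw [himg, union_pair_pair]

lemma numInduced_eq (m : ℕ) :
    numInduced K112 (T m) = 30 * (m.choose 2 * (m * m)) := by
  have hfil : (Finset.univ.filter fun S : Finset (Fin 5 × Fin m) =>
      S.card = Fintype.card (Fin 4) ∧ Nonempty (K112 ≃g (T m).induce (S : Set (Fin 5 × Fin m))))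
      = Finset.univ.filter fun S : Finset (Fin 5 × Fin m) =>
        S.card = 4 ∧ (S.image Prod.fst).card = 3 := by
    ext S
    simp only [Finset.mem_filter, Finset.mem_univ, true_and, Fintype.card_fin]
    constructor
    · rintro ⟨h4, hiso⟩
      exact ⟨h4, image_card_of_iso h4 hiso⟩
    · rintro ⟨h4, h3⟩
      refine ⟨h4, ?_⟩
      obtain ⟨i, j, k, x, y, a, b, hjk, hji, hki, hxy, rfl⟩ := decomp h4 h3
      exact iso_of_decomp hji hki hjk.ne hxy
  rw [numInduced, hfil, count_good]

lemma choose_four_cast (n : ℕ) (hn : 3 ≤ n) :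
    ((n.choose 4 : ℕ) : ℝ) = (n : ℝ) * ((n : ℝ) - 1) * ((n : ℝ) - 2) * ((n : ℝ) - 3) / 24 := by
  have hd : n.descFactorial 4 = 24 * n.choose 4 := by
    have := Nat.descFactorial_eq_factorial_mul_choose n 4
    simpa [Nat.factorial] using this
  have hdv : n.descFactorial 4 = (n - 3) * ((n - 2) * ((n - 1) * n)) := by
    simp [Nat.descFactorial_succ, Nat.descFactorial_zero]
  have hcast : ((n.descFactorial 4 : ℕ) : ℝ)
      = ((n : ℝ) - 3) * (((n : ℝ) - 2) * (((n : ℝ) - 1) * (n : ℝ))) := by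
    rw [hdv]
    push_cast [Nat.cast_sub (by omega : 3 ≤ n), Nat.cast_sub (by omega : 2 ≤ n),
      Nat.cast_sub (by omega : 1 ≤ n)]
    ring
  rw [hd] at hcast
  push_cast at hcast
  linarith

/-- `I(K_{1,1,2}; T_m)/binom(5m,4) → 72/125` as `m → ∞`. -/
theorem K112_density_in_balanced_5partite :
    Tendsto (fun m : ℕ => (numInduced K112 (T m) : ℝ) / ((5 * m).choose 4))
      atTop (𝓝 (72 / 125)) := by
  have hu : Tendsto (fun m : ℕ => ((m : ℝ))⁻¹) atTop (𝓝 0) := by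
    simpa [one_div] using tendsto_one_div_atTop_nhds_zero_nat (𝕜 := ℝ)
  have hden : Tendsto (fun m : ℕ =>
      (5 : ℝ) * (5 - (m : ℝ)⁻¹) * (5 - 2 * (m : ℝ)⁻¹) * (5 - 3 * (m : ℝ)⁻¹))
      atTop (𝓝 ((5 : ℝ) * (5 - 0) * (5 - 2 * 0) * (5 - 3 * 0))) := by
    exact (((tendsto_const_nhds.mul (tendsto_const_nhds.sub hu)).mul
      (tendsto_const_nhds.sub (tendsto_const_nhds.mul hu))).mul
      (tendsto_const_nhds.sub (tendsto_const_nhds.mul hu)))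
  have hnum : Tendsto (fun m : ℕ => (360 : ℝ) * (1 - (m : ℝ)⁻¹)) atTop
      (𝓝 ((360 : ℝ) * (1 - 0))) :=
    tendsto_const_nhds.mul (tendsto_const_nhds.sub hu)
  have hlim : Tendsto (fun m : ℕ =>
      ((360 : ℝ) * (1 - (m : ℝ)⁻¹)) /
        ((5 : ℝ) * (5 - (m : ℝ)⁻¹) * (5 - 2 * (m : ℝ)⁻¹) * (5 - 3 * (m : ℝ)⁻¹)))
      atTop (𝓝 (72 / 125)) := by
    have h := hnum.div hden (by norm_num)
    convert h using 2
    all_goals norm_num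
  apply Tendsto.congr' _ hlim
  filter_upwards [eventually_ge_atTop 1] with m hm
  have hm1 : (1 : ℝ) ≤ (m : ℝ) := by exact_mod_cast hm
  have hm0 : (m : ℝ) ≠ 0 := by linarith
  have hinv : (m : ℝ)⁻¹ ≤ 1 := by
    rw [inv_le_one_iff₀]; right; exact hm1
  have hinvpos : (0 : ℝ) < (m : ℝ)⁻¹ := by positivity
  have e1 : (5 : ℝ) * m - 1 ≠ 0 := by nlinarith
  have e2 : (5 : ℝ) * m - 2 ≠ 0 := by nlinarith
  have e3 : (5 : ℝ) * m - 3 ≠ 0 := by nlinarith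
  have f1 : (5 : ℝ) - (m : ℝ)⁻¹ ≠ 0 := by nlinarith
  have f2 : (5 : ℝ) - 2 * (m : ℝ)⁻¹ ≠ 0 := by nlinarith
  have f3 : (5 : ℝ) - 3 * (m : ℝ)⁻¹ ≠ 0 := by nlinarith
  rw [numInduced_eq, choose_four_cast (5 * m) (by omega)]
  push_cast [Nat.cast_choose_two]
  field_simp
  ring
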